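/- Let A = k[x]/(x^{n+1}). Every nearly Frobenius coproduct Δ on A is a k-linear combination of the coproducts Δ_m, 0 ≤ m ≤ n, defined by Δ_m(x^l) = Σ_{i+j=n+m+l, 0 ≤ i,j ≤ n} x^i ⊗ x^j. In particular, the space of nearly Frobenius coproducts on A has dimension n+1. -/

import Mathlib

open TensorProduct Polynomial Finset

/-- The truncated polynomial algebra `k[x]/(x^(n+1))`. -/
abbrev TruncPoly (k : Type*) [Field k] (n : ℕ) : Type _ :=
  AdjoinRoot ((Polynomial.X : Polynomial k) ^ (n + 1))

/-- A nearly Frobenius coproduct on `A`: a coassociative `A`-bimodule map. -/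
def IsNearlyFrobenius (k : Type*) [Field k] (A : Type*) [Ring A] [Algebra k A]
    (Δ : A →ₗ[k] A ⊗[k] A) : Prop :=
  (∀ a x b : A, Δ (a * x * b) = (a ⊗ₜ[k] (1 : A)) * Δ x * ((1 : A) ⊗ₜ[k] b)) ∧
  (∀ x : A, (TensorProduct.assoc k A A A) (LinearMap.rTensor A Δ (Δ x)) =
      LinearMap.lTensor A Δ (Δ x))


set_option maxHeartbeats 1000000
set_option synthInstance.maxHeartbeats 400000

noncomputable section
namespace TruncAux

variable {k : Type*} [Field k] {n : ℕ}


variable {k : Type*} [Field k] {n : ℕ}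

def Xr (k : Type*) [Field k] (n : ℕ) : TruncPoly k n :=
  AdjoinRoot.root ((Polynomial.X : Polynomial k) ^ (n + 1))

lemma Xr_pow_zero {i : ℕ} (h : n < i) : (Xr k n) ^ i = 0 := by
  have h1 : (Xr k n) ^ (n+1) = 0 := by
    rw [Xr, ← AdjoinRoot.mk_X, ← map_pow, AdjoinRoot.mk_self]
  have : i = (n+1) + (i - (n+1)) := by omega
  rw [this, pow_add, h1, zero_mul]

def bA (k : Type*) [Field k] (n : ℕ) : Module.Basis (Fin (n+1)) k (TruncPoly k n) :=
  ((AdjoinRoot.powerBasis' (g := (X : Polynomial k)^(n+1)) (monic_X_pow _)).basis).reindex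
    (finCongr (by simp))

lemma bA_apply (i : Fin (n+1)) : bA k n i = Xr k n ^ (i : ℕ) := by
  rw [bA, Module.Basis.reindex_apply]
  have := (AdjoinRoot.powerBasis' (g := (X : Polynomial k)^(n+1)) (monic_X_pow _)).basis_eq_pow
  rw [this]
  simp [AdjoinRoot.powerBasis'_gen, Xr]

/-- basic tensors of powers -/
def E (k : Type*) [Field k] (n : ℕ) (i j : ℕ) : TruncPoly k n ⊗[k] TruncPoly k n :=
  (Xr k n ^ i) ⊗ₜ[k] (Xr k n ^ j)

lemma E_zero_left {i j : ℕ} (h : n < i) : E k n i j = 0 := by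
  rw [E, Xr_pow_zero h, zero_tmul]

lemma E_zero_right {i j : ℕ} (h : n < j) : E k n i j = 0 := by
  rw [E, Xr_pow_zero h, tmul_zero]

def BB (k : Type*) [Field k] (n : ℕ) :
    Module.Basis (Fin (n+1) × Fin (n+1)) k (TruncPoly k n ⊗[k] TruncPoly k n) :=
  (bA k n).tensorProduct (bA k n)

lemma BB_apply (p : Fin (n+1) × Fin (n+1)) : BB k n p = E k n p.1 p.2 := by
  rw [BB, Module.Basis.tensorProduct_apply', bA_apply, bA_apply, E]

lemma repr_E (i j : ℕ) (a b : Fin (n+1)) :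
    (BB k n).repr (E k n i j) (a, b) = if (i = (a:ℕ) ∧ j = (b:ℕ)) then 1 else 0 := by
  by_cases hi : i ≤ n
  · by_cases hj : j ≤ n
    · have : E k n i j = BB k n (⟨i, by omega⟩, ⟨j, by omega⟩) := by
        rw [BB_apply]
      rw [this, Module.Basis.repr_self, Finsupp.single_apply]
      congr 1
      simp [Prod.ext_iff, Fin.ext_iff]
    · rw [E_zero_right (by omega), map_zero]
      have : ¬ (i = (a:ℕ) ∧ j = (b:ℕ)) := by
        rintro ⟨_, rfl⟩; exact hj b.is_le
      simp [this]
  · rw [E_zero_left (by omega), map_zero]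
    have : ¬ (i = (a:ℕ) ∧ j = (b:ℕ)) := by
      rintro ⟨rfl, _⟩; exact hi a.is_le
    simp [this]

/-- evaluation of a coordinate-sum with unique surviving index -/
lemma sum_ite_unique {ι : Type*} [Fintype ι] [DecidableEq ι] (f : ι → k)
    (Q : ι → Prop) [DecidablePred Q] (p₀ : ι) (h : ∀ p, Q p ↔ p = p₀) :
    (∑ p, f p * (if Q p then 1 else 0)) = f p₀ := by
  rw [Finset.sum_congr rfl (fun p _ => by rw [if_congr (h p) rfl rfl])]
  simp [mul_ite]

lemma sum_ite_zero {ι : Type*} [Fintype ι] (f : ι → k)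
    (Q : ι → Prop) [DecidablePred Q] (h : ∀ p, ¬ Q p) :
    (∑ p, f p * (if Q p then 1 else 0)) = 0 := by
  simp [h]

/-- the key shift lemma -/
lemma lemA (u t : ℕ) (ht : n + u ≤ t) :
    ∑ p ∈ range (n+1), E k n (u+p) (t-(u+p)) = ∑ r ∈ range (n+1), E k n r (t-r) := by
  have h1 : ∑ p ∈ range (n+1), E k n (u+p) (t-(u+p))
      = ∑ r ∈ (range (n+1)).image (u + ·), E k n r (t-r) := by
    rw [Finset.sum_image (by intro a _ b _ h; simp only at h; omega)]
  have himg : (range (n+1)).image (u + ·) = Finset.Ico u (u+n+1) := by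
    ext r
    simp only [Finset.mem_image, Finset.mem_range, Finset.mem_Ico]
    constructor
    · rintro ⟨a, ha, rfl⟩; omega
    · intro h; exact ⟨r - u, by omega, by omega⟩
  rw [h1, himg]
  have h2 : Finset.Ico u (u+n+1) ⊆ range (u+n+1) := by
    intro r hr; simp at hr ⊢; omega
  have h3 : range (n+1) ⊆ range (u+n+1) := by
    intro r hr; simp at hr ⊢; omega
  rw [Finset.sum_subset h2 (fun r hr hr' => by
    apply E_zero_right
    simp [Finset.mem_Ico] at hr hr'
    omega)]
  rw [Finset.sum_subset h3 (fun r hr hr' => by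
    apply E_zero_left
    simp at hr hr'
    omega)]







/-- The `m`-th canonical coproduct value at 1. -/
def Tm (k : Type*) [Field k] (n : ℕ) (m : ℕ) : TruncPoly k n ⊗[k] TruncPoly k n :=
  ∑ p ∈ range (n+1), E k n p (n+m-p)

/-- The `m`-th canonical nearly Frobenius coproduct. -/
def Dm (k : Type*) [Field k] (n : ℕ) (m : ℕ) :
    TruncPoly k n →ₗ[k] TruncPoly k n ⊗[k] TruncPoly k n :=
  (LinearMap.mulRight k (Tm k n m)).comp
    (Algebra.TensorProduct.includeLeft (R := k) (S := k)).toLinearMap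

lemma Dm_apply (m : ℕ) (a : TruncPoly k n) :
    Dm k n m a = (a ⊗ₜ[k] (1 : TruncPoly k n)) * Tm k n m := rfl

lemma pow_mul_E (l i j : ℕ) :
    ((Xr k n ^ l) ⊗ₜ[k] (1 : TruncPoly k n)) * E k n i j = E k n (l+i) j := by
  rw [E, E, Algebra.TensorProduct.tmul_mul_tmul, one_mul]
  congr 1
  exact (pow_add _ _ _).symm

lemma E_mul_tmul (i j l : ℕ) :
    E k n i j * ((1 : TruncPoly k n) ⊗ₜ[k] (Xr k n ^ l)) = E k n i (j+l) := by
  rw [E, E, Algebra.TensorProduct.tmul_mul_tmul, mul_one]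
  congr 1
  exact (pow_add _ _ _).symm

lemma D_pow (m l : ℕ) :
    Dm k n m (Xr k n ^ l) = ∑ p ∈ range (n+1), E k n p (n+m+l-p) := by
  rw [Dm_apply, Tm, Finset.mul_sum]
  have h1 : ∀ p ∈ range (n+1),
      ((Xr k n ^ l) ⊗ₜ[k] (1 : TruncPoly k n)) * E k n p (n+m-p)
        = E k n (l+p) ((n+m+l) - (l+p)) := by
    intro p hp
    simp only [Finset.mem_range] at hp
    rw [pow_mul_E]
    congr 1
    omega
  rw [Finset.sum_congr rfl h1, lemA l (n+m+l) (by omega)]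

lemma pow_comm' (m j : ℕ) :
    Dm k n m (Xr k n ^ j) = Tm k n m * ((1 : TruncPoly k n) ⊗ₜ[k] (Xr k n ^ j)) := by
  rw [D_pow, Tm, Finset.sum_mul]
  apply Finset.sum_congr rfl
  intro p hp
  simp only [Finset.mem_range] at hp
  rw [E_mul_tmul]
  congr 1
  omega

lemma comm_Tm (m : ℕ) (u : TruncPoly k n) :
    (u ⊗ₜ[k] (1 : TruncPoly k n)) * Tm k n m
      = Tm k n m * ((1 : TruncPoly k n) ⊗ₜ[k] u) := by
  have h : Dm k n m = (LinearMap.mulLeft k (Tm k n m)).comp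
      (Algebra.TensorProduct.includeRight (R := k) (A := TruncPoly k n)).toLinearMap := by
    apply Module.Basis.ext (bA k n)
    intro i
    rw [bA_apply]
    rw [LinearMap.comp_apply, AlgHom.toLinearMap_apply, Algebra.TensorProduct.includeRight_apply,
      LinearMap.mulLeft_apply]
    exact pow_comm' m (i : ℕ)
  have := LinearMap.congr_fun h u
  simpa [Dm_apply] using this

lemma Dm_bimod (m : ℕ) (a x b : TruncPoly k n) :
    Dm k n m (a * x * b)
      = (a ⊗ₜ[k] (1 : TruncPoly k n)) * Dm k n m x * ((1 : TruncPoly k n) ⊗ₜ[k] b) := by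
  rw [Dm_apply, Dm_apply]
  have h1 : ((a*x*b) ⊗ₜ[k] (1 : TruncPoly k n))
      = (a ⊗ₜ[k] (1:TruncPoly k n)) * (x ⊗ₜ[k] (1:TruncPoly k n)) * (b ⊗ₜ[k] (1:TruncPoly k n)) := by
    rw [Algebra.TensorProduct.tmul_mul_tmul, Algebra.TensorProduct.tmul_mul_tmul, mul_one, mul_one]
  rw [h1, mul_assoc, mul_assoc, comm_Tm,
    mul_assoc (a ⊗ₜ[k] (1 : TruncPoly k n)) ((x ⊗ₜ[k] (1 : TruncPoly k n)) * Tm k n m)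
      ((1 : TruncPoly k n) ⊗ₜ[k] b),
    mul_assoc (x ⊗ₜ[k] (1 : TruncPoly k n)) (Tm k n m) ((1 : TruncPoly k n) ⊗ₜ[k] b)]

/-- pairwise coassociativity -/
lemma coassoc_pair (m m' : ℕ) (x : TruncPoly k n) :
    (TensorProduct.assoc k (TruncPoly k n) (TruncPoly k n) (TruncPoly k n))
        (LinearMap.rTensor (TruncPoly k n) (Dm k n m) (Dm k n m' x))
      = LinearMap.lTensor (TruncPoly k n) (Dm k n m') (Dm k n m x) := by
  have key : ∀ l : ℕ,
      (TensorProduct.assoc k (TruncPoly k n) (TruncPoly k n) (TruncPoly k n))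
          (LinearMap.rTensor (TruncPoly k n) (Dm k n m) (Dm k n m' (Xr k n ^ l)))
        = LinearMap.lTensor (TruncPoly k n) (Dm k n m') (Dm k n m (Xr k n ^ l)) := by
    intro l
    have hL : (TensorProduct.assoc k (TruncPoly k n) (TruncPoly k n) (TruncPoly k n))
        (LinearMap.rTensor (TruncPoly k n) (Dm k n m) (Dm k n m' (Xr k n ^ l)))
        = ∑ q ∈ range (n+1), (Xr k n ^ q) ⊗ₜ[k]
            (∑ r ∈ range (n+1), E k n r (2*n+m+m'+l - q - r)) := by
      rw [D_pow, map_sum, map_sum]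
      have h1 : ∀ p ∈ range (n+1),
          (TensorProduct.assoc k (TruncPoly k n) (TruncPoly k n) (TruncPoly k n))
            (LinearMap.rTensor (TruncPoly k n) (Dm k n m) (E k n p (n+m'+l-p)))
          = ∑ q ∈ range (n+1),
              (Xr k n ^ q) ⊗ₜ[k] (E k n (n+m+p-q) (n+m'+l-p)) := by
        intro p hp
        rw [E, LinearMap.rTensor_tmul, D_pow, TensorProduct.sum_tmul, map_sum]
        apply Finset.sum_congr rfl
        intro q hq
        rw [E, TensorProduct.assoc_tmul, E]
      rw [Finset.sum_congr rfl h1, Finset.sum_comm]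
      apply Finset.sum_congr rfl
      intro q hq
      simp only [Finset.mem_range] at hq
      rw [← TensorProduct.tmul_sum]
      congr 1
      have h2 : ∀ p ∈ range (n+1),
          E k n (n+m+p-q) (n+m'+l-p)
            = E k n ((n+m-q)+p) ((2*n+m+m'+l-q) - ((n+m-q)+p)) := by
        intro p hp
        simp only [Finset.mem_range] at hp
        congr 1 <;> omega
      rw [Finset.sum_congr rfl h2, lemA (n+m-q) (2*n+m+m'+l-q) (by omega)]
    have hR : LinearMap.lTensor (TruncPoly k n) (Dm k n m') (Dm k n m (Xr k n ^ l))
        = ∑ q ∈ range (n+1), (Xr k n ^ q) ⊗ₜ[k]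
            (∑ r ∈ range (n+1), E k n r (2*n+m+m'+l - q - r)) := by
      rw [D_pow, map_sum]
      apply Finset.sum_congr rfl
      intro q hq
      simp only [Finset.mem_range] at hq
      rw [E, LinearMap.lTensor_tmul, D_pow]
      congr 1
      apply Finset.sum_congr rfl
      intro r hr
      congr 1
      omega
    rw [hL, hR]
  have heq : ((TensorProduct.assoc k (TruncPoly k n) (TruncPoly k n) (TruncPoly k n)).toLinearMap.comp
        ((LinearMap.rTensor (TruncPoly k n) (Dm k n m)).comp (Dm k n m')))
      = (LinearMap.lTensor (TruncPoly k n) (Dm k n m')).comp (Dm k n m) := by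
    apply Module.Basis.ext (bA k n)
    intro i
    rw [bA_apply]
    simpa using key (i : ℕ)
  simpa using LinearMap.congr_fun heq x

lemma double_ite (t : ℕ) (ht : n ≤ t) :
    ∑ i ∈ range (n+1), ∑ j ∈ range (n+1),
        (if i + j = t then (Xr k n ^ i) ⊗ₜ[k] (Xr k n ^ j) else 0)
      = ∑ i ∈ range (n+1), E k n i (t-i) := by
  apply Finset.sum_congr rfl
  intro i hi
  simp only [Finset.mem_range] at hi
  have h1 : ∀ j ∈ range (n+1),
      (if i + j = t then (Xr k n ^ i) ⊗ₜ[k] (Xr k n ^ j) else 0)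
        = if j = t - i then E k n i j else 0 := by
    intro j hj
    exact if_congr (by omega) rfl rfl
  rw [Finset.sum_congr rfl h1, Finset.sum_ite_eq' (range (n+1)) (t-i) (E k n i)]
  by_cases h : t - i ∈ range (n+1)
  · simp [h]
  · simp only [h, if_false]
    simp only [Finset.mem_range] at h
    exact (E_zero_right (by omega)).symm







/-- coordinates of a combination of E's -/
lemma repr_comb (c : Fin (n+1) × Fin (n+1) → k) (f g : Fin (n+1) × Fin (n+1) → ℕ)
    (a b : Fin (n+1)) :
    (BB k n).repr (∑ p, c p • E k n (f p) (g p)) (a, b)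
      = ∑ p, c p * (if (f p = (a:ℕ) ∧ g p = (b:ℕ)) then 1 else 0) := by
  rw [map_sum, Finset.sum_apply']
  apply Finset.sum_congr rfl
  intro p _
  rw [map_smul, Finsupp.smul_apply, repr_E, smul_eq_mul]

/-- coordinates of `∑ p ∈ range (n+1), E p (t-p)` -/
lemma repr_sumE (t : ℕ) (ht : n ≤ t) (a b : Fin (n+1)) :
    (BB k n).repr (∑ p ∈ range (n+1), E k n p (t-p)) (a, b)
      = if t - (a:ℕ) = (b:ℕ) then 1 else 0 := by
  rw [map_sum, Finset.sum_apply']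
  have h1 : ∀ p ∈ range (n+1),
      ((BB k n).repr (E k n p (t-p))) (a, b)
        = if p = (a:ℕ) then (if t - (a:ℕ) = (b:ℕ) then (1:k) else 0) else 0 := by
    intro p hp
    rw [repr_E, ite_and]
    by_cases h : p = (a : ℕ)
    · subst h; rfl
    · simp [h]
  rw [Finset.sum_congr rfl h1, Finset.sum_ite_eq' (range (n+1)) ((a:ℕ))]
  simp [Nat.lt_succ_iff, a.is_le]

theorem part1 (Δ : TruncPoly k n →ₗ[k] TruncPoly k n ⊗[k] TruncPoly k n)
    (hΔ : IsNearlyFrobenius k (TruncPoly k n) Δ) :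
    ∃ c : Fin (n + 1) → k, ∀ l : ℕ,
      Δ (Xr k n ^ l) = ∑ m : Fin (n + 1), c m • ∑ p ∈ range (n+1), E k n p (n + (m:ℕ) + l - p) := by
  set T := Δ 1 with hTdef
  have h1 : ∀ a : TruncPoly k n, Δ a = (a ⊗ₜ[k] (1 : TruncPoly k n)) * T := by
    intro a
    have := hΔ.1 a 1 1
    rw [mul_one, mul_one] at this
    rw [this, ← Algebra.TensorProduct.one_def, mul_one]
  have h2 : ((Xr k n ^ 1) ⊗ₜ[k] (1 : TruncPoly k n)) * T
      = T * ((1 : TruncPoly k n) ⊗ₜ[k] (Xr k n)) := by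
    have ha := hΔ.1 (Xr k n) 1 1
    have hb := hΔ.1 1 1 (Xr k n)
    rw [mul_one, mul_one] at ha
    rw [one_mul, one_mul] at hb
    rw [ha, ← Algebra.TensorProduct.one_def, mul_one] at hb
    rw [pow_one, hb, one_mul]
  set c : Fin (n+1) × Fin (n+1) → k := fun p => (BB k n).repr T p with hc
  have hT : T = ∑ p : Fin (n+1) × Fin (n+1), c p • E k n p.1 p.2 := by
    conv_lhs => rw [← (BB k n).sum_repr T]
    apply Finset.sum_congr rfl
    intro p _
    rw [BB_apply]
  -- cc : extended coordinates
  set cc : ℕ → ℕ → k := fun i j =>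
    if h : i ≤ n ∧ j ≤ n then c (⟨i, by omega⟩, ⟨j, by omega⟩) else 0 with hcc
  have hccpos : ∀ i j (hi : i ≤ n) (hj : j ≤ n), cc i j = c (⟨i, by omega⟩, ⟨j, by omega⟩) := by
    intro i j hi hj
    rw [hcc]
    exact dif_pos ⟨hi, hj⟩
  -- the shift relation
  have eq1 : ∀ a b : Fin (n+1),
      (∑ p : Fin (n+1) × Fin (n+1), c p * (if (1 + (p.1:ℕ) = (a:ℕ) ∧ (p.2:ℕ) = (b:ℕ)) then 1 else 0))
      = ∑ p : Fin (n+1) × Fin (n+1), c p * (if ((p.1:ℕ) = (a:ℕ) ∧ (p.2:ℕ) + 1 = (b:ℕ)) then 1 else 0) := by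
    intro a b
    have hL : ((Xr k n ^ 1) ⊗ₜ[k] (1 : TruncPoly k n)) * T
        = ∑ p : Fin (n+1) × Fin (n+1), c p • E k n (1 + (p.1:ℕ)) (p.2:ℕ) := by
      rw [hT, Finset.mul_sum]
      apply Finset.sum_congr rfl
      intro p _
      rw [mul_smul_comm, pow_mul_E]
    have hR : T * ((1 : TruncPoly k n) ⊗ₜ[k] (Xr k n))
        = ∑ p : Fin (n+1) × Fin (n+1), c p • E k n (p.1:ℕ) ((p.2:ℕ) + 1) := by
      rw [hT, Finset.sum_mul]
      apply Finset.sum_congr rfl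
      intro p _
      rw [smul_mul_assoc]
      congr 1
      rw [E, E, Algebra.TensorProduct.tmul_mul_tmul, mul_one]
      congr 1
    have := congrArg (fun z => (BB k n).repr z (a, b)) h2
    simp only [hL, hR] at this
    rw [repr_comb, repr_comb] at this
    exact this
  have relA : ∀ α β : ℕ, α + 1 ≤ n → β + 1 ≤ n → cc α (β+1) = cc (α+1) β := by
    intro α β hα hβ
    have h := eq1 ⟨α+1, by omega⟩ ⟨β+1, by omega⟩
    rw [sum_ite_unique c _ ((⟨α, by omega⟩ : Fin (n+1)), (⟨β+1, by omega⟩ : Fin (n+1)))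
      (by rintro ⟨p1, p2⟩; simp only [Prod.ext_iff, Fin.ext_iff, Fin.val_mk]; omega)] at h
    rw [sum_ite_unique c _ ((⟨α+1, by omega⟩ : Fin (n+1)), (⟨β, by omega⟩ : Fin (n+1)))
      (by rintro ⟨p1, p2⟩; simp only [Prod.ext_iff, Fin.ext_iff, Fin.val_mk]; omega)] at h
    rw [hccpos α (β+1) (by omega) (by omega), hccpos (α+1) β (by omega) (by omega)]
    exact h
  have relB : ∀ β : ℕ, β + 1 ≤ n → cc 0 β = 0 := by
    intro β hβ
    have h := eq1 ⟨0, by omega⟩ ⟨β+1, by omega⟩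
    rw [sum_ite_zero c _ (by rintro ⟨p1, p2⟩; simp only [Fin.val_mk]; omega)] at h
    rw [sum_ite_unique c _ ((⟨0, by omega⟩ : Fin (n+1)), (⟨β, by omega⟩ : Fin (n+1)))
      (by rintro ⟨p1, p2⟩; simp only [Prod.ext_iff, Fin.ext_iff, Fin.val_mk]; omega)] at h
    rw [hccpos 0 β (by omega) (by omega)]
    exact h.symm
  have diag : ∀ d i j, i ≤ n → j ≤ n → n - j ≤ d →
      cc i j = if n ≤ i + j then cc (i + j - n) n else 0 := by
    intro d
    induction d with
    | zero =>
      intro i j hi hj hd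
      have hjn : j = n := by omega
      subst hjn
      rw [if_pos (by omega)]
      congr 1
      omega
    | succ d ih =>
      intro i j hi hj hd
      by_cases hjn : j = n
      · subst hjn
        rw [if_pos (by omega)]
        congr 1
        omega
      · by_cases hi0 : i = 0
        · subst hi0
          rw [if_neg (by omega)]
          exact relB j (by omega)
        · have h := relA (i-1) j (by omega) (by omega)
          rw [show i - 1 + 1 = i by omega] at h
          rw [← h, ih (i-1) (j+1) (by omega) (by omega) (by omega),
            show i - 1 + (j+1) = i + j by omega]
  refine ⟨fun m => cc (m:ℕ) n, fun l => ?_⟩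
  apply (BB k n).repr.injective
  ext pab
  obtain ⟨a, b⟩ := pab
  have hLrepr : (BB k n).repr (Δ (Xr k n ^ l)) (a, b)
      = if l ≤ (a:ℕ) ∧ n + l ≤ (a:ℕ) + (b:ℕ) then cc ((a:ℕ) + (b:ℕ) - n - l) n else 0 := by
    have hXl : Δ (Xr k n ^ l) = ∑ p : Fin (n+1) × Fin (n+1), c p • E k n (l + (p.1:ℕ)) (p.2:ℕ) := by
      rw [h1, hT, Finset.mul_sum]
      apply Finset.sum_congr rfl
      intro p _
      rw [mul_smul_comm, pow_mul_E]
    rw [hXl, repr_comb]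
    by_cases hla : l ≤ (a:ℕ)
    · rw [sum_ite_unique c _ ((⟨(a:ℕ) - l, by omega⟩ : Fin (n+1)), b)
        (by rintro ⟨p1, p2⟩; simp only [Prod.ext_iff, Fin.ext_iff, Fin.val_mk]; omega)]
      rw [← hccpos ((a:ℕ) - l) (b:ℕ) (by omega) b.is_le]
      rw [diag (n - (b:ℕ)) ((a:ℕ) - l) (b:ℕ) (by omega) b.is_le (by omega)]
      by_cases hcond : n ≤ (a:ℕ) - l + (b:ℕ)
      · rw [if_pos hcond, if_pos ⟨hla, by omega⟩]
        congr 1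
        omega
      · rw [if_neg hcond, if_neg (by omega)]
    · rw [sum_ite_zero c _ (by rintro ⟨p1, p2⟩; simp only [Fin.val_mk]; omega), if_neg (by omega)]
  have hRrepr : (BB k n).repr
      (∑ m : Fin (n + 1), cc (m:ℕ) n • ∑ p ∈ range (n+1), E k n p (n + (m:ℕ) + l - p)) (a, b)
      = if l ≤ (a:ℕ) ∧ n + l ≤ (a:ℕ) + (b:ℕ) then cc ((a:ℕ) + (b:ℕ) - n - l) n else 0 := by
    rw [map_sum, Finset.sum_apply']
    have h1 : ∀ m ∈ (univ : Finset (Fin (n+1))),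
        ((BB k n).repr (cc (m:ℕ) n • ∑ p ∈ range (n+1), E k n p (n + (m:ℕ) + l - p))) (a, b)
          = cc (m:ℕ) n * (if n + (m:ℕ) + l - (a:ℕ) = (b:ℕ) then 1 else 0) := by
      intro m _
      rw [map_smul, Finsupp.smul_apply, repr_sumE (n + (m:ℕ) + l) (by omega), smul_eq_mul]
    rw [Finset.sum_congr rfl h1]
    by_cases hcond : n + l ≤ (a:ℕ) + (b:ℕ)
    · rw [sum_ite_unique _ _ (⟨(a:ℕ) + (b:ℕ) - n - l, by omega⟩ : Fin (n+1))
        (by intro m; simp only [Fin.ext_iff, Fin.val_mk]; omega)]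
      rw [if_pos ⟨by omega, hcond⟩]
    · rw [sum_ite_zero _ _ (by intro m; omega), if_neg (by omega)]
  rw [hLrepr, hRrepr]







lemma Dm_one (m : ℕ) : Dm k n m 1 = Tm k n m := by
  rw [Dm_apply, ← Algebra.TensorProduct.one_def, one_mul]

lemma comb_apply (c : Fin (n+1) → k) (y : TruncPoly k n) :
    (∑ m : Fin (n+1), c m • Dm k n m) y = ∑ m : Fin (n+1), c m • Dm k n m y := by
  rw [LinearMap.sum_apply]
  apply Finset.sum_congr rfl
  intro m _
  rw [LinearMap.smul_apply]

lemma comb_isNF (c : Fin (n+1) → k) :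
    IsNearlyFrobenius k (TruncPoly k n) (∑ m : Fin (n+1), c m • Dm k n m) := by
  constructor
  · intro a x b
    rw [comb_apply, comb_apply, Finset.mul_sum, Finset.sum_mul]
    apply Finset.sum_congr rfl
    intro m _
    rw [Dm_bimod, mul_smul_comm, smul_mul_assoc]
  · intro x
    have hr : LinearMap.rTensor (TruncPoly k n) (∑ m : Fin (n+1), c m • Dm k n m)
        = ∑ m : Fin (n+1), c m • LinearMap.rTensor (TruncPoly k n) (Dm k n m) := by
      simp only [← LinearMap.coe_rTensorHom, map_sum, map_smul]
    have hl : LinearMap.lTensor (TruncPoly k n) (∑ m : Fin (n+1), c m • Dm k n m)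
        = ∑ m : Fin (n+1), c m • LinearMap.lTensor (TruncPoly k n) (Dm k n m) := by
      simp only [← LinearMap.coe_lTensorHom, map_sum, map_smul]
    rw [comb_apply, hr, hl]
    rw [LinearMap.sum_apply, map_sum]
    rw [LinearMap.sum_apply]
    have hL1 : ∀ m ∈ (univ : Finset (Fin (n+1))),
        (TensorProduct.assoc k (TruncPoly k n) (TruncPoly k n) (TruncPoly k n))
            ((c m • LinearMap.rTensor (TruncPoly k n) (Dm k n m))
              (∑ m' : Fin (n+1), c m' • Dm k n m' x))
          = ∑ m' : Fin (n+1), (c m * c m') •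
              LinearMap.lTensor (TruncPoly k n) (Dm k n m') (Dm k n m x) := by
      intro m _
      rw [LinearMap.smul_apply, map_smul, map_sum, map_sum, Finset.smul_sum]
      apply Finset.sum_congr rfl
      intro m' _
      rw [map_smul, map_smul, coassoc_pair, smul_smul]
    rw [Finset.sum_congr rfl hL1]
    have hR1 : ∀ m' ∈ (univ : Finset (Fin (n+1))),
        (c m' • LinearMap.lTensor (TruncPoly k n) (Dm k n m'))
            (∑ m : Fin (n+1), c m • Dm k n m x)
          = ∑ m : Fin (n+1), (c m' * c m) •
              LinearMap.lTensor (TruncPoly k n) (Dm k n m') (Dm k n m x) := by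
      intro m' _
      rw [LinearMap.smul_apply, map_sum, Finset.smul_sum]
      apply Finset.sum_congr rfl
      intro m _
      rw [map_smul, smul_smul]
    rw [Finset.sum_congr rfl hR1, Finset.sum_comm]
    apply Finset.sum_congr rfl
    intro m' _
    apply Finset.sum_congr rfl
    intro m _
    rw [mul_comm]

lemma Dm_linearIndependent :
    LinearIndependent k (fun m : Fin (n+1) => Dm k n m) := by
  rw [Fintype.linearIndependent_iff]
  intro g hg m₀
  have h1 := LinearMap.congr_fun hg (1 : TruncPoly k n)
  rw [comb_apply] at h1
  simp only [LinearMap.zero_apply] at h1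
  have h2 : ∑ m : Fin (n+1), g m • Tm k n m = 0 := by
    rw [← h1]
    apply Finset.sum_congr rfl
    intro m _
    rw [Dm_one]
  have h3 := congrArg (fun z => (BB k n).repr z (m₀, (⟨n, by omega⟩ : Fin (n+1)))) h2
  simp only [map_sum, map_zero, Finsupp.coe_zero, Pi.zero_apply, Finset.sum_apply'] at h3
  have h4 : ∀ m ∈ (univ : Finset (Fin (n+1))),
      ((BB k n).repr (g m • Tm k n m)) (m₀, (⟨n, by omega⟩ : Fin (n+1)))
        = g m * (if n + (m:ℕ) - (m₀:ℕ) = ((⟨n, by omega⟩ : Fin (n+1)):ℕ) then 1 else 0) := by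
    intro m _
    rw [map_smul, Finsupp.smul_apply, Tm, repr_sumE (n + (m:ℕ)) (by omega), smul_eq_mul]
  rw [Finset.sum_congr rfl h4, sum_ite_unique g _ m₀
    (by intro m; simp only [Fin.ext_iff, Fin.val_mk]; omega)] at h3
  exact h3


end TruncAux

open TruncAux in
/-- Every nearly Frobenius coproduct on `A = k[x]/(x^(n+1))` is a linear
combination of the coproducts `Δ_m(x^l) = Σ_{i+j=n+m+l, 0 ≤ i,j ≤ n} x^i ⊗ x^j`
(`0 ≤ m ≤ n`); in particular the space of nearly Frobenius coproducts has
dimension `n+1`. -/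
theorem truncPoly_nearlyFrobenius_classification (k : Type*) [Field k] (n : ℕ) :
    (∀ Δ : TruncPoly k n →ₗ[k] TruncPoly k n ⊗[k] TruncPoly k n,
      IsNearlyFrobenius k (TruncPoly k n) Δ →
      ∃ c : Fin (n + 1) → k, ∀ l ≤ n,
        Δ ((AdjoinRoot.root ((Polynomial.X : Polynomial k) ^ (n + 1))) ^ l) =
          ∑ m : Fin (n + 1), c m •
            ∑ i ∈ Finset.range (n + 1), ∑ j ∈ Finset.range (n + 1),
              if i + j = n + (m : ℕ) + l then
                ((AdjoinRoot.root ((Polynomial.X : Polynomial k) ^ (n + 1))) ^ i) ⊗ₜ[k]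
                  ((AdjoinRoot.root ((Polynomial.X : Polynomial k) ^ (n + 1))) ^ j)
              else 0) ∧
    (∃ S : Submodule k (TruncPoly k n →ₗ[k] TruncPoly k n ⊗[k] TruncPoly k n),
      (S : Set (TruncPoly k n →ₗ[k] TruncPoly k n ⊗[k] TruncPoly k n)) =
        {Δ | IsNearlyFrobenius k (TruncPoly k n) Δ} ∧
      Module.finrank k S = n + 1) := by
  have hmain : ∀ Δ : TruncPoly k n →ₗ[k] TruncPoly k n ⊗[k] TruncPoly k n,
      IsNearlyFrobenius k (TruncPoly k n) Δ →
      ∃ c : Fin (n + 1) → k, ∀ l : ℕ,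
        Δ (Xr k n ^ l) =
          ∑ m : Fin (n + 1), c m •
            ∑ i ∈ Finset.range (n + 1), ∑ j ∈ Finset.range (n + 1),
              if i + j = n + (m : ℕ) + l then (Xr k n ^ i) ⊗ₜ[k] (Xr k n ^ j) else 0 := by
    intro Δ hΔ
    obtain ⟨c, hc⟩ := part1 Δ hΔ
    refine ⟨c, fun l => ?_⟩
    rw [hc l]
    apply Finset.sum_congr rfl
    intro m _
    rw [double_ite (n + (m:ℕ) + l) (by omega)]
  constructor
  · intro Δ hΔ
    obtain ⟨c, hc⟩ := hmain Δ hΔ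
    exact ⟨c, fun l _ => hc l⟩
  · refine ⟨Submodule.span k (Set.range (fun m : Fin (n+1) => Dm k n m)), ?_, ?_⟩
    · ext Δ
      simp only [SetLike.mem_coe, Set.mem_setOf_eq]
      constructor
      · intro hmem
        rw [Submodule.mem_span_range_iff_exists_fun] at hmem
        obtain ⟨c, rfl⟩ := hmem
        exact comb_isNF c
      · intro hΔ
        obtain ⟨c, hc⟩ := part1 Δ hΔ
        have hEq : Δ = ∑ m : Fin (n+1), c m • Dm k n m := by
          apply Module.Basis.ext (bA k n)
          intro i
          rw [bA_apply, comb_apply, hc (i:ℕ)]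
          apply Finset.sum_congr rfl
          intro m _
          rw [D_pow]
        rw [hEq]
        exact Submodule.sum_mem _ fun m _ =>
          Submodule.smul_mem _ _ (Submodule.subset_span ⟨m, rfl⟩)
    · rw [finrank_span_eq_card Dm_linearIndependent, Fintype.card_fin]

end
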